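/- For every multigraph G (possibly with loops) and every valid pair of functions (g,h), the (g,h)-oriented chromatic index satisfies χ'_{(g,h)}(G) = max{Δ_{(g,h)}(G), W_{(g,h)}(G)}. -/

import Mathlib

open Classical

noncomputable section

namespace MG

variable {V : Type} {E : Type} [Fintype V] [Fintype E] [DecidableEq V]

/-- The number of times vertex `v` occurs as an endpoint of the unordered pair `s`
(so a loop at `v` counts twice). -/
def mult (v : V) (s : Sym2 V) : ℕ :=
  Sym2.lift ⟨fun a b => (if a = v then 1 else 0) + (if b = v then 1 else 0),
    fun _ _ => add_comm _ _⟩ s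

/-- The degree of a vertex in the multigraph whose edges `E` have endpoints given
by `ends` (loops count twice). -/
def degree (ends : E → Sym2 V) (v : V) : ℕ := ∑ e : E, mult v (ends e)

/-- Maximum degree `Δ(G)`. -/
def maxDegree (ends : E → Sym2 V) : ℕ := Finset.univ.sup fun v => degree ends v

/-- `e(S)`: the number of edges with all endpoints in `S`. -/
def edgesWithin (ends : E → Sym2 V) (S : Finset V) : ℕ :=
  (Finset.univ.filter fun e => ∀ v ∈ ends e, v ∈ S).card

/-- The degree of `v` in the subgraph induced by `S`. -/
def degreeIn (ends : E → Sym2 V) (S : Finset V) (v : V) : ℕ :=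
  ∑ e ∈ Finset.univ.filter (fun e => ∀ u ∈ ends e, u ∈ S), mult v (ends e)

/-- Adjacency; a vertex with a loop is adjacent to itself. -/
def Adj (ends : E → Sym2 V) (u v : V) : Prop := ∃ e, ends e = s(u, v)

/-- The multigraph has no loops. -/
def Loopless (ends : E → Sym2 V) : Prop := ∀ e, ¬ (ends e).IsDiag

/-- Reachability by walks. -/
def Reaches (ends : E → Sym2 V) (u v : V) : Prop :=
  Relation.ReflTransGen (Adj ends) u v

/-- The connected component of `v`, as a set of vertices. -/
def component (ends : E → Sym2 V) (v : V) : Finset V :=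
  Finset.univ.filter fun u => Reaches ends v u

/-- A pseudoforest: every connected component contains at most one cycle
(a loop counts as a cycle); equivalently, every connected component has at
most as many edges as vertices. -/
def IsPseudoforest (ends : E → Sym2 V) : Prop :=
  ∀ v : V, edgesWithin ends (component ends v) ≤ (component ends v).card

/-- A forest (acyclic multigraph): every connected component has strictly fewer
edges than vertices. -/
def IsForest (ends : E → Sym2 V) : Prop :=
  ∀ v : V, edgesWithin ends (component ends v) + 1 ≤ (component ends v).card

/-- An orientation assigns to each edge an ordered pair of its endpoints
(tail, head). -/
def IsOrientation (ends : E → Sym2 V) (D : E → V × V) : Prop :=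
  ∀ e, s((D e).1, (D e).2) = ends e

/-- Indegree of `v` under the orientation `D`. -/
def inDeg (D : E → V × V) (v : V) : ℕ := (Finset.univ.filter fun e => (D e).2 = v).card

/-- Outdegree of `v` under the orientation `D`. -/
def outDeg (D : E → V × V) (v : V) : ℕ := (Finset.univ.filter fun e => (D e).1 = v).card

/-- `G` is `(g,h)`-orientable: there is an orientation in which every vertex `v`
has indegree at most `g v` and outdegree at most `h v`. -/
def GHOrientable (ends : E → Sym2 V) (g h : V → ℕ∞) : Prop :=
  ∃ D : E → V × V, IsOrientation ends D ∧
    (∀ v, (inDeg D v : ℕ∞) ≤ g v) ∧ (∀ v, (outDeg D v : ℕ∞) ≤ h v)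

/-- `(g,h)` is a valid pair of functions for `G`. -/
def ValidPair (ends : E → Sym2 V) (g h : V → ℕ∞) : Prop :=
  (∀ v : V, 1 ≤ g v + h v) ∧
  (∀ u v : V, Adj ends u v → 1 ≤ g u + g v) ∧
  (∀ u v : V, Adj ends u v → 1 ≤ h u + h v)

/-- The endpoint map of the subgraph consisting of the edges satisfying `P`. -/
def subEnds (ends : E → Sym2 V) (P : E → Prop) : {e // P e} → Sym2 V :=
  fun e => ends e.val

/-- A `(g,h)`-oriented-coloring: each color class is a `(g,h)`-orientable subgraph. -/
def GHColoring (ends : E → Sym2 V) (g h : V → ℕ∞) {k : ℕ} (C : E → Fin k) : Prop :=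
  ∀ c : Fin k, GHOrientable (subEnds ends fun e => C e = c) g h

/-- The `(g,h)`-oriented chromatic index `χ'_{(g,h)}(G)`. -/
def ghChromaticIndex (ends : E → Sym2 V) (g h : V → ℕ∞) : ℕ :=
  sInf {k | ∃ C : E → Fin k, GHColoring ends g h C}

/-- Ceiling division `⌈a/b⌉` on ℕ. -/
def cdiv (a b : ℕ) : ℕ := (a + b - 1) / b

/-- Replace `∞` values of `g` by the maximum degree `Δ(G)`. -/
def trunc (ends : E → Sym2 V) (g : V → ℕ∞) (v : V) : ℕ :=
  WithTop.untopD (maxDegree ends) (g v)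

/-- The weighted maximum degree `Δ_{(g,h)}(G) = max_v ⌈d(v)/(g(v)+h(v))⌉`
(values `∞` of `g, h` replaced by `Δ(G)`). -/
def ghMaxDegree (ends : E → Sym2 V) (g h : V → ℕ∞) : ℕ :=
  Finset.univ.sup fun v => cdiv (degree ends v) (trunc ends g v + trunc ends h v)

/-- The weighted maximum density
`W_{(g,h)}(G) = max_{S, g(S) ≥ 1, h(S) ≥ 1} ⌈e(S)/min{g(S),h(S)}⌉`
(values `∞` of `g, h` replaced by `Δ(G)`). -/
def ghMaxDensity (ends : E → Sym2 V) (g h : V → ℕ∞) : ℕ :=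
  (Finset.univ.filter fun S : Finset V =>
      (1 ≤ ∑ v ∈ S, g v) ∧ (1 ≤ ∑ v ∈ S, h v)).sup
    fun S => cdiv (edgesWithin ends S)
      (min (∑ v ∈ S, trunc ends g v) (∑ v ∈ S, trunc ends h v))

/-- An edge-coloring into pseudoforests. -/
def PaColoring (ends : E → Sym2 V) {k : ℕ} (C : E → Fin k) : Prop :=
  ∀ c : Fin k, IsPseudoforest (subEnds ends fun e => C e = c)

/-- The pseudoarboricity `pa(G)`. -/
def pa (ends : E → Sym2 V) : ℕ := sInf {k | ∃ C : E → Fin k, PaColoring ends C}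

/-- An edge-coloring into degree-`f` pseudoforests. -/
def PafColoring (ends : E → Sym2 V) (f : V → ℕ) {k : ℕ} (C : E → Fin k) : Prop :=
  ∀ c : Fin k, IsPseudoforest (subEnds ends fun e => C e = c) ∧
    ∀ v, degree (subEnds ends fun e => C e = c) v ≤ f v

/-- The degree-`f` pseudoarboricity `pa_f(G)`. -/
def paf (ends : E → Sym2 V) (f : V → ℕ) : ℕ :=
  sInf {k | ∃ C : E → Fin k, PafColoring ends f C}

/-- The weighted maximum degree `Δ_f(G) = max_v ⌈d(v)/f(v)⌉`. -/
def fMaxDegree (ends : E → Sym2 V) (f : V → ℕ) : ℕ :=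
  Finset.univ.sup fun v => cdiv (degree ends v) (f v)

/-- An edge-coloring into degree-`f` forests. -/
def AfColoring (ends : E → Sym2 V) (f : V → ℕ) {k : ℕ} (C : E → Fin k) : Prop :=
  ∀ c : Fin k, IsForest (subEnds ends fun e => C e = c) ∧
    ∀ v, degree (subEnds ends fun e => C e = c) v ≤ f v

/-- The degree-`f` arboricity `a_f(G)`. -/
def af (ends : E → Sym2 V) (f : V → ℕ) : ℕ :=
  sInf {k | ∃ C : E → Fin k, AfColoring ends f C}

/-- The arboricity `a(G)`. -/
def arboricity (ends : E → Sym2 V) : ℕ :=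
  sInf {k | ∃ C : E → Fin k, ∀ c : Fin k, IsForest (subEnds ends fun e => C e = c)}

/-- The linear arboricity `la(G)`: color classes are linear forests, i.e.
degree-2 forests. -/
def la (ends : E → Sym2 V) : ℕ := af ends fun _ => 2

/-- `G` is `k`-degenerate: every (induced, nonempty) subgraph has a vertex of
degree at most `k`. -/
def Degenerate (ends : E → Sym2 V) (k : ℕ) : Prop :=
  ∀ S : Finset V, S.Nonempty → ∃ v ∈ S, degreeIn ends S v ≤ k

/-- An `f`-coloring: in each color class every vertex `v` has degree at most `f v`. -/
def FColoring (ends : E → Sym2 V) (f : V → ℕ) {k : ℕ} (C : E → Fin k) : Prop :=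
  ∀ c : Fin k, ∀ v, degree (subEnds ends fun e => C e = c) v ≤ f v

/-- The `f`-chromatic index `χ'_f(G)`. -/
def fChromaticIndex (ends : E → Sym2 V) (f : V → ℕ) : ℕ :=
  sInf {k | ∃ C : E → Fin k, FColoring ends f C}

/-- `G` is bipartite: the vertices can be split into two sides so that every
edge has one endpoint on each side. -/
def Bipartite (ends : E → Sym2 V) : Prop :=
  ∃ P : V → Prop, ∀ e : E, ∃ u v, ends e = s(u, v) ∧ P u ∧ ¬ P v

/-- The list analogue `χ'_{(g,h),ℓ}(G)`: the least `k` such that every list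
assignment with lists of size at least `k` admits a coloring from the lists in
which each color class is `(g,h)`-orientable. -/
def ghListChromaticIndex (ends : E → Sym2 V) (g h : V → ℕ∞) : ℕ :=
  sInf {k | ∀ L : E → Finset ℕ, (∀ e, k ≤ (L e).card) →
    ∃ C : E → ℕ, (∀ e, C e ∈ L e) ∧
      ∀ c : ℕ, GHOrientable (subEnds ends fun e => C e = c) g h}

/-- The list degree-`f` pseudoarboricity `pa_{f,ℓ}(G)`. -/
def pafList (ends : E → Sym2 V) (f : V → ℕ) : ℕ :=
  sInf {k | ∀ L : E → Finset ℕ, (∀ e, k ≤ (L e).card) →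
    ∃ C : E → ℕ, (∀ e, C e ∈ L e) ∧
      ∀ c : ℕ, IsPseudoforest (subEnds ends fun e => C e = c) ∧
        ∀ v, degree (subEnds ends fun e => C e = c) v ≤ f v}

/-- The list `f`-chromatic index `χ'_{f,ℓ}(G)`. -/
def fListChromaticIndex (ends : E → Sym2 V) (f : V → ℕ) : ℕ :=
  sInf {k | ∀ L : E → Finset ℕ, (∀ e, k ≤ (L e).card) →
    ∃ C : E → ℕ, (∀ e, C e ∈ L e) ∧
      ∀ c : ℕ, ∀ v, degree (subEnds ends fun e => C e = c) v ≤ f v}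


section AuxLemmas
variable {V : Type} {E : Type} [Fintype V] [Fintype E] [DecidableEq V]

lemma mult_mk (v a b : V) :
    mult v s(a, b) = (if a = v then 1 else 0) + (if b = v then 1 else 0) := rfl

lemma cdiv_zero' (a : ℕ) : cdiv a 0 = 0 := by simp [cdiv]

lemma cdiv_le_iff {b : ℕ} (hb : 0 < b) (a j : ℕ) : cdiv a b ≤ j ↔ a ≤ j * b := by
  unfold cdiv
  rw [Nat.div_le_iff_le_mul_add_pred hb, Nat.mul_comm]
  omega

lemma ends_eq {ends : E → Sym2 V} {D : E → V × V} (hD : IsOrientation ends D) (e : E) :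
    ends e = s((D e).1, (D e).2) := by rw [← hD e]

lemma mem_ends_iff {ends : E → Sym2 V} {D : E → V × V} (hD : IsOrientation ends D)
    (e : E) (w : V) : w ∈ ends e ↔ w = (D e).1 ∨ w = (D e).2 := by
  rw [ends_eq hD e, Sym2.mem_iff]

lemma inDeg_eq_sum (D : E → V × V) (v : V) :
    inDeg D v = ∑ e : E, if (D e).2 = v then 1 else 0 := Finset.card_filter _ _

lemma outDeg_eq_sum (D : E → V × V) (v : V) :
    outDeg D v = ∑ e : E, if (D e).1 = v then 1 else 0 := Finset.card_filter _ _

lemma degree_eq_out_add_in {ends : E → Sym2 V} {D : E → V × V}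
    (hD : IsOrientation ends D) (v : V) :
    degree ends v = outDeg D v + inDeg D v := by
  rw [inDeg_eq_sum, outDeg_eq_sum, ← Finset.sum_add_distrib]
  unfold degree
  refine Finset.sum_congr rfl fun e _ => ?_
  rw [ends_eq hD e, mult_mk]

lemma sum_subtype_univ' (P : E → Prop) [Fintype {x // P x}] [DecidablePred P] (f : E → ℕ) :
    (∑ e : {x // P x}, f e.val) = ∑ e ∈ Finset.univ.filter P, f e :=
  (Finset.sum_subtype (Finset.univ.filter P) (by simp) f).symm

lemma card_filter_subtype (P Q : E → Prop) [Fintype {x // P x}]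
    [DecidablePred P] [DecidablePred Q] :
    (Finset.univ.filter fun e : {x // P x} => Q e.val).card
      = (Finset.univ.filter fun e => P e ∧ Q e).card := by
  rw [Finset.card_filter, Finset.card_filter,
    sum_subtype_univ' P (fun e => if Q e then 1 else 0), Finset.sum_filter]
  refine Finset.sum_congr rfl fun e _ => ?_
  by_cases hP : P e <;> by_cases hQ : Q e <;> simp [hP, hQ]

lemma sum_subtype_univ (P : E → Prop) (f : E → ℕ) :
    (∑ e : {x // P x}, f e.val) = ∑ e ∈ Finset.univ.filter P, f e :=
  (Finset.sum_subtype (Finset.univ.filter P) (by simp) f).symm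

lemma sum_fiber {k : ℕ} (C : E → Fin k) (f : E → ℕ) :
    ∑ c : Fin k, ∑ e ∈ Finset.univ.filter fun e => C e = c, f e = ∑ e : E, f e := by
  exact Finset.sum_fiberwise _ _ _

lemma card_fiber {k : ℕ} (C : E → Fin k) (P : E → Prop) [DecidablePred P] :
    ∑ c : Fin k, (Finset.univ.filter fun e => C e = c ∧ P e).card
      = (Finset.univ.filter P).card := by
  rw [Finset.card_eq_sum_card_fiberwise (f := C) (t := Finset.univ) (fun x _ => Finset.mem_univ _)]
  refine Finset.sum_congr rfl fun c _ => ?_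
  congr 1
  ext e
  simp [and_comm]

end AuxLemmas

section Walks
variable {V : Type} {E : Type} [Fintype V] [Fintype E] [DecidableEq V]

def IsWalk (D : E → V × V) : List E → V → V → Prop
  | [], u, v => u = v
  | e :: l, u, v => (D e).1 = u ∧ IsWalk D l (D e).2 v

def ArcRel (D : E → V × V) (a b : V) : Prop := ∃ e, D e = (a, b)

lemma exists_walk_of_reflTransGen {D : E → V × V} {u v : V}
    (h : Relation.ReflTransGen (ArcRel D) u v) : ∃ l, IsWalk D l u v := by
  induction h using Relation.ReflTransGen.head_induction_on with
  | refl => exact ⟨[], rfl⟩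
  | head hab _ ih =>
      obtain ⟨l, hl⟩ := ih
      obtain ⟨e, he⟩ := hab
      refine ⟨e :: l, ?_, ?_⟩
      · rw [he]
      · rw [he]; exact hl

lemma isWalk_suffix {D : E → V × V} (l₁ l₂ : List E) (u v : V)
    (h : IsWalk D (l₁ ++ l₂) u v) : ∃ b, IsWalk D l₂ b v := by
  induction l₁ generalizing u with
  | nil => exact ⟨u, h⟩
  | cons e l ih => exact ih _ h.2

lemma isWalk_update {D : E → V × V} {e : E} {p : V × V} {l : List E} {u v : V}
    (hel : e ∉ l) (h : IsWalk D l u v) : IsWalk (Function.update D e p) l u v := by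
  induction l generalizing u with
  | nil => exact h
  | cons f l ih =>
      have hf : f ≠ e := fun hfe => hel (hfe ▸ List.mem_cons_self)
      refine ⟨?_, ?_⟩
      · rw [Function.update_of_ne hf]; exact h.1
      · rw [Function.update_of_ne hf]
        exact ih (fun hl => hel (List.mem_cons_of_mem _ hl)) h.2

lemma ite_flip (a b : V) : (if a = b then 1 else 0) = (if b = a then 1 else 0) := by
  by_cases h : a = b
  · simp [h]
  · simp [h, Ne.symm h]

lemma inDeg_update (D : E → V × V) (e : E) (a b : V) (w : V) :
    inDeg (Function.update D e (a, b)) w + (if w = (D e).2 then 1 else 0)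
      = inDeg D w + (if w = b then 1 else 0) := by
  classical
  rw [inDeg_eq_sum, inDeg_eq_sum]
  rw [← Finset.sum_erase_add Finset.univ _ (Finset.mem_univ e),
      ← Finset.sum_erase_add Finset.univ (fun e' => if (D e').2 = w then 1 else 0)
        (Finset.mem_univ e)]
  have hsame : ∑ e' ∈ Finset.univ.erase e,
        (if ((Function.update D e (a, b)) e').2 = w then 1 else 0)
      = ∑ e' ∈ Finset.univ.erase e, (if (D e').2 = w then 1 else 0) := by
    refine Finset.sum_congr rfl fun f hf => ?_
    rw [Function.update_of_ne (Finset.ne_of_mem_erase hf)]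
  rw [hsame, Function.update_self]
  rw [show ((a, b).2 : V) = b from rfl]
  rw [ite_flip b w, ite_flip ((D e).2) w]
  omega

lemma outDeg_update (D : E → V × V) (e : E) (a b : V) (w : V) :
    outDeg (Function.update D e (a, b)) w + (if w = (D e).1 then 1 else 0)
      = outDeg D w + (if w = a then 1 else 0) := by
  classical
  rw [outDeg_eq_sum, outDeg_eq_sum]
  rw [← Finset.sum_erase_add Finset.univ _ (Finset.mem_univ e),
      ← Finset.sum_erase_add Finset.univ (fun e' => if (D e').1 = w then 1 else 0)
        (Finset.mem_univ e)]
  have hsame : ∑ e' ∈ Finset.univ.erase e,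
        (if ((Function.update D e (a, b)) e').1 = w then 1 else 0)
      = ∑ e' ∈ Finset.univ.erase e, (if (D e').1 = w then 1 else 0) := by
    refine Finset.sum_congr rfl fun f hf => ?_
    rw [Function.update_of_ne (Finset.ne_of_mem_erase hf)]
  rw [hsame, Function.update_self]
  rw [show ((a, b).1 : V) = a from rfl]
  rw [ite_flip a w, ite_flip ((D e).1) w]
  omega

lemma reverse_walk (ends : E → Sym2 V) :
    ∀ (n : ℕ) (D : E → V × V), IsOrientation ends D → ∀ (l : List E) (u v : V),
    l.length ≤ n → IsWalk D l u v →
    ∃ D', IsOrientation ends D' ∧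
      (∀ w, inDeg D' w + (if w = v then 1 else 0) = inDeg D w + (if w = u then 1 else 0)) ∧
      (∀ w, outDeg D' w + (if w = u then 1 else 0) = outDeg D w + (if w = v then 1 else 0)) := by
  intro n
  induction n with
  | zero =>
      intro D hD l u v hlen hw
      rw [Nat.le_zero, List.length_eq_zero_iff] at hlen
      subst hlen
      cases hw
      exact ⟨D, hD, fun w => rfl, fun w => rfl⟩
  | succ n ih =>
      intro D hD l u v hlen hw
      by_cases huv : u = v
      · subst huv; exact ⟨D, hD, fun w => rfl, fun w => rfl⟩
      cases l with
      | nil => exact absurd hw huv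
      | cons e l' =>
          obtain ⟨he1, hw'⟩ := hw
          by_cases hxu : (D e).2 = u
          · exact ih D hD l' u v (Nat.le_of_succ_le_succ (by simpa using hlen)) (hxu ▸ hw')
          by_cases hel : e ∈ l'
          · obtain ⟨l₁, l₂, rfl⟩ := List.append_of_mem hel
            obtain ⟨b, hb⟩ := isWalk_suffix l₁ (e :: l₂) _ v hw'
            have hbu : b = u := by rw [← hb.1, he1]
            subst hbu
            refine ih D hD (e :: l₂) b v ?_ hb
            simp only [List.length_cons, List.length_append] at hlen ⊢
            omega
          · have hD₂ : IsOrientation ends (Function.update D e ((D e).2, u)) := by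
              intro f
              by_cases hf : f = e
              · subst hf
                rw [Function.update_self, ← hD f]
                have : D f = (u, (D f).2) := by rw [← he1]
                conv_rhs => rw [this]
                exact Sym2.eq_swap
              · rw [Function.update_of_ne hf]; exact hD f
            have hw₂ : IsWalk (Function.update D e ((D e).2, u)) l' (D e).2 v :=
              isWalk_update hel hw'
            obtain ⟨D₃, hD₃, hin, hout⟩ :=
              ih _ hD₂ l' (D e).2 v (Nat.le_of_succ_le_succ (by simpa using hlen)) hw₂
            refine ⟨D₃, hD₃, fun w => ?_, fun w => ?_⟩
            · have h2 := inDeg_update D e ((D e).2) u w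
              have h3 := hin w
              omega
            · have h2 := outDeg_update D e ((D e).2) u w
              have h3 := hout w
              have h4 : (if w = (D e).1 then 1 else 0) = (if w = u then 1 else 0) := by
                rw [he1]
              omega

end Walks


section OrientTheorem
variable {V : Type} {E : Type} [Fintype V] [Fintype E] [DecidableEq V]

def Phi (D : E → V × V) (G H : V → ℕ) : ℕ :=
  ∑ v : V, ((inDeg D v - G v) + (outDeg D v - H v))

lemma descent {ends : E → Sym2 V} {G H : V → ℕ}
    (hS : ∀ S : Finset V, edgesWithin ends S ≤ ∑ v ∈ S, G v)
    (hd : ∀ v, degree ends v ≤ G v + H v)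
    {D : E → V × V} (hD : IsOrientation ends D) {v : V} (hv : G v < inDeg D v) :
    ∃ D', IsOrientation ends D' ∧ Phi D' G H < Phi D G H := by
  classical
  set R : Finset V := Finset.univ.filter fun u => Relation.ReflTransGen (ArcRel D) u v with hR
  have hvR : v ∈ R := by
    simp only [hR, Finset.mem_filter, Finset.mem_univ, true_and]
    exact Relation.ReflTransGen.refl
  have hclosed : ∀ e, (D e).2 ∈ R → ∀ w ∈ ends e, w ∈ R := by
    intro e he w hw
    rw [mem_ends_iff hD] at hw
    simp only [hR, Finset.mem_filter, Finset.mem_univ, true_and] at he ⊢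
    rcases hw with h1 | h2
    · subst h1
      exact Relation.ReflTransGen.head ⟨e, rfl⟩ he
    · subst h2; exact he
  have hcount : ∑ u ∈ R, inDeg D u = edgesWithin ends R := by
    unfold edgesWithin
    rw [Finset.card_eq_sum_card_fiberwise (f := fun e => (D e).2) (t := R)
      (fun e he => by
        simp only [Finset.mem_coe, Finset.mem_filter, Finset.mem_univ, true_and] at he
        exact he _ ((mem_ends_iff hD e _).2 (Or.inr rfl)))]
    refine Finset.sum_congr rfl fun u hu => ?_
    unfold inDeg
    congr 1
    apply Finset.ext
    intro e
    simp only [Finset.mem_filter, Finset.mem_univ, true_and]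
    exact ⟨fun h2 => ⟨hclosed e (by rw [h2]; exact hu), h2⟩, fun h => h.2⟩
  have hEx : ∃ u ∈ R, inDeg D u < G u := by
    by_contra hno
    push_neg at hno
    have hlt : ∑ u ∈ R, G u < ∑ u ∈ R, inDeg D u :=
      Finset.sum_lt_sum hno ⟨v, hvR, hv⟩
    have := hS R
    omega
  obtain ⟨u, huR, hu⟩ := hEx
  have hne : u ≠ v := fun h => by subst h; omega
  have hreach : Relation.ReflTransGen (ArcRel D) u v := by
    simp only [hR, Finset.mem_filter, Finset.mem_univ, true_and] at huR
    exact huR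
  obtain ⟨l, hl⟩ := exists_walk_of_reflTransGen hreach
  obtain ⟨D', hD', hin, hout⟩ := reverse_walk ends l.length D hD l u v le_rfl hl
  refine ⟨D', hD', ?_⟩
  have hdegv : degree ends v = outDeg D v + inDeg D v := degree_eq_out_add_in hD v
  have hdv := hd v
  unfold Phi
  refine Finset.sum_lt_sum (fun w _ => ?_) ⟨v, Finset.mem_univ v, ?_⟩
  · have hinw := hin w
    have houtw := hout w
    by_cases hwu : w = u
    · subst hwu
      rw [if_pos rfl, if_neg hne] at hinw houtw
      omega
    · by_cases hwv : w = v
      · subst hwv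
        rw [if_pos rfl, if_neg (Ne.symm hne)] at hinw houtw
        omega
      · rw [if_neg hwu, if_neg hwv] at hinw houtw
        omega
  · have hinw := hin v
    have houtw := hout v
    rw [if_pos rfl, if_neg (Ne.symm hne)] at hinw houtw
    omega

def revOr (D : E → V × V) : E → V × V := fun e => ((D e).2, (D e).1)

lemma isOrientation_revOr {ends : E → Sym2 V} {D : E → V × V} (hD : IsOrientation ends D) :
    IsOrientation ends (revOr D) := by
  intro e
  rw [← hD e]
  exact Sym2.eq_swap

lemma inDeg_revOr (D : E → V × V) (w : V) : inDeg (revOr D) w = outDeg D w := rfl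

lemma outDeg_revOr (D : E → V × V) (w : V) : outDeg (revOr D) w = inDeg D w := rfl

lemma phi_revOr (D : E → V × V) (G H : V → ℕ) : Phi (revOr D) H G = Phi D G H := by
  unfold Phi
  refine Finset.sum_congr rfl fun w _ => ?_
  rw [inDeg_revOr, outDeg_revOr]
  omega

lemma descent' {ends : E → Sym2 V} {G H : V → ℕ}
    (hS : ∀ S : Finset V, edgesWithin ends S ≤ ∑ v ∈ S, H v)
    (hd : ∀ v, degree ends v ≤ G v + H v)
    {D : E → V × V} (hD : IsOrientation ends D) {v : V} (hv : H v < outDeg D v) :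
    ∃ D', IsOrientation ends D' ∧ Phi D' G H < Phi D G H := by
  obtain ⟨D'', hD'', hlt⟩ := descent (G := H) (H := G) hS
    (fun w => by rw [Nat.add_comm]; exact hd w) (isOrientation_revOr hD)
    (v := v) (by rw [inDeg_revOr]; exact hv)
  refine ⟨revOr D'', isOrientation_revOr hD'', ?_⟩
  rw [← phi_revOr (revOr D'') G H]
  have : revOr (revOr D'') = D'' := rfl
  rw [this]
  rw [phi_revOr D G H] at hlt
  exact hlt

lemma orientation_exists (ends : E → Sym2 V) (G H : V → ℕ)
    (hd : ∀ v, degree ends v ≤ G v + H v)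
    (hSg : ∀ S : Finset V, edgesWithin ends S ≤ ∑ v ∈ S, G v)
    (hSh : ∀ S : Finset V, edgesWithin ends S ≤ ∑ v ∈ S, H v) :
    ∃ D, IsOrientation ends D ∧ (∀ v, inDeg D v ≤ G v) ∧ (∀ v, outDeg D v ≤ H v) := by
  classical
  set S : Set ℕ := {n | ∃ D : E → V × V, IsOrientation ends D ∧ Phi D G H = n} with hSdef
  have hne : S.Nonempty := by
    refine ⟨_, fun e => (ends e).out, fun e => ?_, rfl⟩
    exact Quot.out_eq (ends e)
  obtain ⟨D, hD, hPhi⟩ := Nat.sInf_mem hne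
  rcases Nat.eq_zero_or_pos (Phi D G H) with h0 | hpos
  · refine ⟨D, hD, fun v => ?_, fun v => ?_⟩ <;>
    · have := (Finset.sum_eq_zero_iff.1 h0) v (Finset.mem_univ v)
      omega
  · exfalso
    have hex : ∃ v, G v < inDeg D v ∨ H v < outDeg D v := by
      by_contra hno
      push_neg at hno
      have : Phi D G H = 0 := Finset.sum_eq_zero fun v _ => by
        have := hno v; omega
      omega
    obtain ⟨v, hv | hv⟩ := hex
    · obtain ⟨D', hD', hlt⟩ := descent hSg hd hD hv
      have hmem : Phi D' G H ∈ S := ⟨D', hD', rfl⟩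
      have := Nat.sInf_le hmem
      omega
    · obtain ⟨D', hD', hlt⟩ := descent' hSh hd hD hv
      have hmem : Phi D' G H ∈ S := ⟨D', hD', rfl⟩
      have := Nat.sInf_le hmem
      omega

end OrientTheorem

section Split
variable {V : Type} [Fintype V] [DecidableEq V]

lemma forall_mem_sym2 {α : Type} {P : α → Prop} (a b : α) :
    (∀ w ∈ s(a, b), P w) ↔ P a ∧ P b := by
  constructor
  · intro h
    exact ⟨h a (Sym2.mem_mk_left a b), h b (Sym2.mem_mk_right a b)⟩
  · rintro ⟨ha, hb⟩ w hw
    rcases Sym2.mem_iff.1 hw with rfl | rfl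
    · exact ha
    · exact hb

lemma sum_sum_type (S : Finset (V ⊕ V)) (f : V ⊕ V → ℕ) :
    ∑ s ∈ S, f s
      = ∑ v ∈ Finset.univ.filter (fun v => Sum.inl v ∈ S), f (Sum.inl v)
        + ∑ v ∈ Finset.univ.filter (fun v => Sum.inr v ∈ S), f (Sum.inr v) := by
  classical
  have h1 : ∑ s ∈ S, f s = ∑ s : V ⊕ V, if s ∈ S then f s else 0 := by
    rw [Finset.sum_ite_mem, Finset.univ_inter]
  rw [h1, Fintype.sum_sum_type]
  congr 1 <;> rw [Finset.sum_filter]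

lemma split_orientation (k : ℕ) :
    ∀ (E : Type) [Fintype E], ∀ (D : E → V × V) (a b : V → ℕ),
    1 ≤ k →
    (∀ v, (Finset.univ.filter fun e => (D e).2 = v).card ≤ k * a v) →
    (∀ v, (Finset.univ.filter fun e => (D e).1 = v).card ≤ k * b v) →
    ∃ C : E → Fin k, ∀ (c : Fin k) (v : V),
      (Finset.univ.filter fun e => C e = c ∧ (D e).2 = v).card ≤ a v ∧
      (Finset.univ.filter fun e => C e = c ∧ (D e).1 = v).card ≤ b v := by
  induction k with
  | zero => intro _ _ _ _ _ h; exact absurd h (by omega)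
  | succ k ih =>
      intro E _ D a b _ hina houtb
      rcases Nat.eq_zero_or_pos k with hk0 | hkpos
      · subst hk0
        refine ⟨fun _ => 0, fun c v => ⟨?_, ?_⟩⟩
        · calc (Finset.univ.filter fun e => (fun _ => (0 : Fin 1)) e = c ∧ (D e).2 = v).card
              ≤ (Finset.univ.filter fun e => (D e).2 = v).card :=
                Finset.card_le_card (fun e he => by
                  simp only [Finset.mem_filter, Finset.mem_univ, true_and] at he ⊢
                  exact he.2)
            _ ≤ 1 * a v := hina v
            _ = a v := Nat.one_mul _
        · calc (Finset.univ.filter fun e => (fun _ => (0 : Fin 1)) e = c ∧ (D e).1 = v).card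
              ≤ (Finset.univ.filter fun e => (D e).1 = v).card :=
                Finset.card_le_card (fun e he => by
                  simp only [Finset.mem_filter, Finset.mem_univ, true_and] at he ⊢
                  exact he.2)
            _ ≤ 1 * b v := houtb v
            _ = b v := Nat.one_mul _
      · classical
        set ends' : E → Sym2 (V ⊕ V) :=
          fun e => s(Sum.inl (D e).1, Sum.inr (D e).2) with hends'
        set G' : V ⊕ V → ℕ := Sum.elim (fun v => k * b v) (fun v => a v) with hG'
        set H' : V ⊕ V → ℕ := Sum.elim (fun v => b v) (fun v => k * a v) with hH'
        have hdegl : ∀ v : V, degree ends' (Sum.inl v)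
            = (Finset.univ.filter fun e => (D e).1 = v).card := by
          intro v
          unfold degree
          rw [Finset.card_filter]
          refine Finset.sum_congr rfl fun e _ => ?_
          rw [hends', mult_mk]
          by_cases h : (D e).1 = v <;> simp [h]
        have hdegr : ∀ v : V, degree ends' (Sum.inr v)
            = (Finset.univ.filter fun e => (D e).2 = v).card := by
          intro v
          unfold degree
          rw [Finset.card_filter]
          refine Finset.sum_congr rfl fun e _ => ?_
          rw [hends', mult_mk]
          by_cases h : (D e).2 = v <;> simp [h]
        have hd : ∀ s, degree ends' s ≤ G' s + H' s := by
          intro s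
          rcases s with v | v
          · rw [hdegl]
            have h1 := houtb v
            have h2 : (k + 1) * b v = k * b v + b v := by ring
            simp only [hG', hH', Sum.elim_inl]
            omega
          · rw [hdegr]
            have h1 := hina v
            have h2 : (k + 1) * a v = k * a v + a v := by ring
            simp only [hG', hH', Sum.elim_inr]
            omega
        have hcountR : ∀ S : Finset (V ⊕ V),
            edgesWithin ends' S ≤ ∑ v ∈ Finset.univ.filter (fun v => Sum.inr v ∈ S),
              (Finset.univ.filter fun e => (D e).2 = v).card := by
          intro S
          unfold edgesWithin
          have hsub : (Finset.univ.filter fun e => ∀ w ∈ ends' e, w ∈ S)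
              ⊆ Finset.univ.filter fun e =>
                  (D e).2 ∈ Finset.univ.filter (fun v : V => Sum.inr v ∈ S) := by
            intro e he
            simp only [Finset.mem_filter, Finset.mem_univ, true_and, hends'] at he ⊢
            rw [forall_mem_sym2] at he
            exact he.2
          refine le_trans (Finset.card_le_card hsub) ?_
          rw [Finset.card_eq_sum_card_fiberwise (f := fun e => (D e).2)
            (s := Finset.univ.filter fun e => (D e).2 ∈ Finset.univ.filter (fun v : V => Sum.inr v ∈ S))
            (t := Finset.univ.filter (fun v : V => Sum.inr v ∈ S))
            (fun e he => (Finset.mem_filter.1 he).2)]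
          refine Finset.sum_le_sum fun v _ => ?_
          exact Finset.card_le_card
            (Finset.filter_subset_filter _ (Finset.filter_subset _ _))
        have hcountL : ∀ S : Finset (V ⊕ V),
            edgesWithin ends' S ≤ ∑ v ∈ Finset.univ.filter (fun v => Sum.inl v ∈ S),
              (Finset.univ.filter fun e => (D e).1 = v).card := by
          intro S
          unfold edgesWithin
          have hsub : (Finset.univ.filter fun e => ∀ w ∈ ends' e, w ∈ S)
              ⊆ Finset.univ.filter fun e =>
                  (D e).1 ∈ Finset.univ.filter (fun v : V => Sum.inl v ∈ S) := by
            intro e he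
            simp only [Finset.mem_filter, Finset.mem_univ, true_and, hends'] at he ⊢
            rw [forall_mem_sym2] at he
            exact he.1
          refine le_trans (Finset.card_le_card hsub) ?_
          rw [Finset.card_eq_sum_card_fiberwise (f := fun e => (D e).1)
            (s := Finset.univ.filter fun e => (D e).1 ∈ Finset.univ.filter (fun v : V => Sum.inl v ∈ S))
            (t := Finset.univ.filter (fun v : V => Sum.inl v ∈ S))
            (fun e he => (Finset.mem_filter.1 he).2)]
          refine Finset.sum_le_sum fun v _ => ?_
          exact Finset.card_le_card
            (Finset.filter_subset_filter _ (Finset.filter_subset _ _))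
        have hSg' : ∀ S : Finset (V ⊕ V), edgesWithin ends' S ≤ ∑ s ∈ S, G' s := by
          intro S
          have h1 : edgesWithin ends' S
              ≤ (k+1) * ∑ v ∈ Finset.univ.filter (fun v : V => Sum.inr v ∈ S), a v := by
            rw [Finset.mul_sum]
            exact le_trans (hcountR S) (Finset.sum_le_sum fun v _ => hina v)
          have h2 : edgesWithin ends' S
              ≤ (k+1) * ∑ v ∈ Finset.univ.filter (fun v : V => Sum.inl v ∈ S), b v := by
            rw [Finset.mul_sum]
            exact le_trans (hcountL S) (Finset.sum_le_sum fun v _ => houtb v)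
          rw [sum_sum_type S G']
          simp only [hG', Sum.elim_inl, Sum.elim_inr]
          rw [← Finset.mul_sum]
          refine Nat.le_of_mul_le_mul_left ?_ (Nat.succ_pos k)
          calc (k+1) * edgesWithin ends' S
              = k * edgesWithin ends' S + edgesWithin ends' S := by ring
            _ ≤ k * ((k+1) * ∑ v ∈ Finset.univ.filter (fun v : V => Sum.inl v ∈ S), b v)
                + (k+1) * ∑ v ∈ Finset.univ.filter (fun v : V => Sum.inr v ∈ S), a v :=
                add_le_add (Nat.mul_le_mul_left k h2) h1
            _ = (k+1) * (k * ∑ v ∈ Finset.univ.filter (fun v : V => Sum.inl v ∈ S), b v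
                + ∑ v ∈ Finset.univ.filter (fun v : V => Sum.inr v ∈ S), a v) := by ring
        have hSh' : ∀ S : Finset (V ⊕ V), edgesWithin ends' S ≤ ∑ s ∈ S, H' s := by
          intro S
          have h1 : edgesWithin ends' S
              ≤ (k+1) * ∑ v ∈ Finset.univ.filter (fun v : V => Sum.inr v ∈ S), a v := by
            rw [Finset.mul_sum]
            exact le_trans (hcountR S) (Finset.sum_le_sum fun v _ => hina v)
          have h2 : edgesWithin ends' S
              ≤ (k+1) * ∑ v ∈ Finset.univ.filter (fun v : V => Sum.inl v ∈ S), b v := by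
            rw [Finset.mul_sum]
            exact le_trans (hcountL S) (Finset.sum_le_sum fun v _ => houtb v)
          rw [sum_sum_type S H']
          simp only [hH', Sum.elim_inl, Sum.elim_inr]
          rw [← Finset.mul_sum]
          refine Nat.le_of_mul_le_mul_left ?_ (Nat.succ_pos k)
          calc (k+1) * edgesWithin ends' S
              = k * edgesWithin ends' S + edgesWithin ends' S := by ring
            _ ≤ k * ((k+1) * ∑ v ∈ Finset.univ.filter (fun v : V => Sum.inr v ∈ S), a v)
                + (k+1) * ∑ v ∈ Finset.univ.filter (fun v : V => Sum.inl v ∈ S), b v :=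
                add_le_add (Nat.mul_le_mul_left k h1) h2
            _ = (k+1) * (∑ v ∈ Finset.univ.filter (fun v : V => Sum.inl v ∈ S), b v
                + k * ∑ v ∈ Finset.univ.filter (fun v : V => Sum.inr v ∈ S), a v) := by ring
        obtain ⟨D', hD', hinG, houtH⟩ := orientation_exists ends' G' H' hd hSg' hSh'
        have hdir : ∀ e, D' e = (Sum.inl (D e).1, Sum.inr (D e).2)
            ∨ D' e = (Sum.inr (D e).2, Sum.inl (D e).1) := by
          intro e
          have h := hD' e
          rw [hends'] at h
          rw [Sym2.eq_iff] at h
          rcases h with ⟨h1, h2⟩ | ⟨h1, h2⟩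
          · left; exact Prod.ext h1 h2
          · right; exact Prod.ext h1 h2
        set sel : E → Prop := fun e => (D' e).2 = Sum.inr (D e).2 with hseldef
        have hsel1 : ∀ e, sel e →
            (D' e).1 = Sum.inl (D e).1 ∧ (D' e).2 = Sum.inr (D e).2 := by
          intro e hs
          rcases hdir e with h | h
          · rw [h]; exact ⟨rfl, rfl⟩
          · exfalso
            simp only [hseldef] at hs
            rw [h] at hs
            simp at hs
        have hsel2 : ∀ e, ¬ sel e →
            (D' e).1 = Sum.inr (D e).2 ∧ (D' e).2 = Sum.inl (D e).1 := by
          intro e hs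
          rcases hdir e with h | h
          · exfalso
            apply hs
            simp only [hseldef]
            rw [h]
          · rw [h]; exact ⟨rfl, rfl⟩
        have hA : ∀ v, (Finset.univ.filter fun e => sel e ∧ (D e).2 = v).card ≤ a v := by
          intro v
          have hsub : (Finset.univ.filter fun e => sel e ∧ (D e).2 = v)
              ⊆ Finset.univ.filter fun e => (D' e).2 = Sum.inr v := by
            intro e he
            simp only [Finset.mem_filter, Finset.mem_univ, true_and] at he ⊢
            rw [(hsel1 e he.1).2, he.2]
          have := hinG (Sum.inr v)
          simp only [hG', Sum.elim_inr] at this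
          exact le_trans (Finset.card_le_card hsub) this
        have hB : ∀ v, (Finset.univ.filter fun e => sel e ∧ (D e).1 = v).card ≤ b v := by
          intro v
          have hsub : (Finset.univ.filter fun e => sel e ∧ (D e).1 = v)
              ⊆ Finset.univ.filter fun e => (D' e).1 = Sum.inl v := by
            intro e he
            simp only [Finset.mem_filter, Finset.mem_univ, true_and] at he ⊢
            rw [(hsel1 e he.1).1, he.2]
          have := houtH (Sum.inl v)
          simp only [hH', Sum.elim_inl] at this
          exact le_trans (Finset.card_le_card hsub) this
        have hCc : ∀ v, (Finset.univ.filter fun e => ¬ sel e ∧ (D e).2 = v).card ≤ k * a v := by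
          intro v
          have hsub : (Finset.univ.filter fun e => ¬ sel e ∧ (D e).2 = v)
              ⊆ Finset.univ.filter fun e => (D' e).1 = Sum.inr v := by
            intro e he
            simp only [Finset.mem_filter, Finset.mem_univ, true_and] at he ⊢
            rw [(hsel2 e he.1).1, he.2]
          have := houtH (Sum.inr v)
          simp only [hH', Sum.elim_inr] at this
          exact le_trans (Finset.card_le_card hsub) this
        have hDd : ∀ v, (Finset.univ.filter fun e => ¬ sel e ∧ (D e).1 = v).card ≤ k * b v := by
          intro v
          have hsub : (Finset.univ.filter fun e => ¬ sel e ∧ (D e).1 = v)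
              ⊆ Finset.univ.filter fun e => (D' e).2 = Sum.inl v := by
            intro e he
            simp only [Finset.mem_filter, Finset.mem_univ, true_and] at he ⊢
            rw [(hsel2 e he.1).2, he.2]
          have := hinG (Sum.inl v)
          simp only [hG', Sum.elim_inl] at this
          exact le_trans (Finset.card_le_card hsub) this
        obtain ⟨C₂, hC₂⟩ := ih {e : E // ¬ sel e} (fun e₂ => D e₂.val) a b hkpos
          (fun v =>
            (card_filter_subtype (fun e => ¬ sel e) (fun e => (D e).2 = v)).trans_le (hCc v))
          (fun v =>
            (card_filter_subtype (fun e => ¬ sel e) (fun e => (D e).1 = v)).trans_le (hDd v))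
        set C : E → Fin (k + 1) :=
          fun e => if h : sel e then Fin.last k else (C₂ ⟨e, h⟩).castSucc with hCdef
        refine ⟨C, fun c v => ?_⟩
        by_cases hc : c = Fin.last k
        · subst hc
          have hfeA : (Finset.univ.filter fun e => C e = Fin.last k ∧ (D e).2 = v)
                = Finset.univ.filter fun e => sel e ∧ (D e).2 = v := by
            apply Finset.ext
            intro e
            simp only [Finset.mem_filter, Finset.mem_univ, true_and]
            constructor
            · rintro ⟨h1, h2⟩
              refine ⟨?_, h2⟩
              by_contra hs
              simp only [hCdef] at h1
              rw [dif_neg hs] at h1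
              exact (Fin.castSucc_lt_last _).ne h1
            · rintro ⟨h1, h2⟩
              refine ⟨?_, h2⟩
              simp only [hCdef]
              rw [dif_pos h1]
          have hfeB : (Finset.univ.filter fun e => C e = Fin.last k ∧ (D e).1 = v)
                = Finset.univ.filter fun e => sel e ∧ (D e).1 = v := by
            apply Finset.ext
            intro e
            simp only [Finset.mem_filter, Finset.mem_univ, true_and]
            constructor
            · rintro ⟨h1, h2⟩
              refine ⟨?_, h2⟩
              by_contra hs
              simp only [hCdef] at h1
              rw [dif_neg hs] at h1
              exact (Fin.castSucc_lt_last _).ne h1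
            · rintro ⟨h1, h2⟩
              refine ⟨?_, h2⟩
              simp only [hCdef]
              rw [dif_pos h1]
          constructor
          · exact le_of_eq_of_le (congrArg Finset.card hfeA) (hA v)
          · exact le_of_eq_of_le (congrArg Finset.card hfeB) (hB v)
        · obtain ⟨c₂, rfl⟩ : ∃ c₂ : Fin k, c = Fin.castSucc c₂ :=
            ⟨c.castPred hc, (Fin.castSucc_castPred c hc).symm⟩
          have hfeA : (Finset.univ.filter fun e => C e = Fin.castSucc c₂ ∧ (D e).2 = v).card
                = (Finset.univ.filter fun e₂ : {e : E // ¬ sel e} =>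
                    C₂ e₂ = c₂ ∧ (D e₂.val).2 = v).card := by
            have h1 : (Finset.univ.filter fun e₂ : {e : E // ¬ sel e} =>
                  C e₂.val = Fin.castSucc c₂ ∧ (D e₂.val).2 = v).card
                = (Finset.univ.filter fun e =>
                    ¬ sel e ∧ (C e = Fin.castSucc c₂ ∧ (D e).2 = v)).card :=
              card_filter_subtype (fun e => ¬ sel e)
                (fun e => C e = Fin.castSucc c₂ ∧ (D e).2 = v)
            have h2 : (Finset.univ.filter fun e₂ : {e : E // ¬ sel e} =>
                  C e₂.val = Fin.castSucc c₂ ∧ (D e₂.val).2 = v)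
                = (Finset.univ.filter fun e₂ : {e : E // ¬ sel e} =>
                    C₂ e₂ = c₂ ∧ (D e₂.val).2 = v) := by
              apply Finset.ext
              intro e₂
              simp only [Finset.mem_filter, Finset.mem_univ, true_and]
              have hiff : C e₂.val = Fin.castSucc c₂ ↔ C₂ e₂ = c₂ := by
                simp only [hCdef]
                rw [dif_neg e₂.2]
                exact Fin.castSucc_inj
              rw [hiff]
            have h3 : (Finset.univ.filter fun e =>
                  ¬ sel e ∧ (C e = Fin.castSucc c₂ ∧ (D e).2 = v))
                = (Finset.univ.filter fun e => C e = Fin.castSucc c₂ ∧ (D e).2 = v) := by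
              apply Finset.ext
              intro e
              simp only [Finset.mem_filter, Finset.mem_univ, true_and]
              constructor
              · rintro ⟨_, h⟩; exact h
              · rintro ⟨h4, h5⟩
                refine ⟨?_, h4, h5⟩
                intro hs
                simp only [hCdef] at h4
                rw [dif_pos hs] at h4
                exact (Fin.castSucc_lt_last c₂).ne' h4
            calc (Finset.univ.filter fun e => C e = Fin.castSucc c₂ ∧ (D e).2 = v).card
                = (Finset.univ.filter fun e =>
                    ¬ sel e ∧ (C e = Fin.castSucc c₂ ∧ (D e).2 = v)).card := by rw [h3]
              _ = (Finset.univ.filter fun e₂ : {e : E // ¬ sel e} =>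
                    C e₂.val = Fin.castSucc c₂ ∧ (D e₂.val).2 = v).card := h1.symm
              _ = (Finset.univ.filter fun e₂ : {e : E // ¬ sel e} =>
                    C₂ e₂ = c₂ ∧ (D e₂.val).2 = v).card := by rw [h2]
          have hfeB : (Finset.univ.filter fun e => C e = Fin.castSucc c₂ ∧ (D e).1 = v).card
                = (Finset.univ.filter fun e₂ : {e : E // ¬ sel e} =>
                    C₂ e₂ = c₂ ∧ (D e₂.val).1 = v).card := by
            have h1 : (Finset.univ.filter fun e₂ : {e : E // ¬ sel e} =>
                  C e₂.val = Fin.castSucc c₂ ∧ (D e₂.val).1 = v).card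
                = (Finset.univ.filter fun e =>
                    ¬ sel e ∧ (C e = Fin.castSucc c₂ ∧ (D e).1 = v)).card :=
              card_filter_subtype (fun e => ¬ sel e)
                (fun e => C e = Fin.castSucc c₂ ∧ (D e).1 = v)
            have h2 : (Finset.univ.filter fun e₂ : {e : E // ¬ sel e} =>
                  C e₂.val = Fin.castSucc c₂ ∧ (D e₂.val).1 = v)
                = (Finset.univ.filter fun e₂ : {e : E // ¬ sel e} =>
                    C₂ e₂ = c₂ ∧ (D e₂.val).1 = v) := by
              apply Finset.ext
              intro e₂
              simp only [Finset.mem_filter, Finset.mem_univ, true_and]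
              have hiff : C e₂.val = Fin.castSucc c₂ ↔ C₂ e₂ = c₂ := by
                simp only [hCdef]
                rw [dif_neg e₂.2]
                exact Fin.castSucc_inj
              rw [hiff]
            have h3 : (Finset.univ.filter fun e =>
                  ¬ sel e ∧ (C e = Fin.castSucc c₂ ∧ (D e).1 = v))
                = (Finset.univ.filter fun e => C e = Fin.castSucc c₂ ∧ (D e).1 = v) := by
              apply Finset.ext
              intro e
              simp only [Finset.mem_filter, Finset.mem_univ, true_and]
              constructor
              · rintro ⟨_, h⟩; exact h
              · rintro ⟨h4, h5⟩
                refine ⟨?_, h4, h5⟩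
                intro hs
                simp only [hCdef] at h4
                rw [dif_pos hs] at h4
                exact (Fin.castSucc_lt_last c₂).ne' h4
            calc (Finset.univ.filter fun e => C e = Fin.castSucc c₂ ∧ (D e).1 = v).card
                = (Finset.univ.filter fun e =>
                    ¬ sel e ∧ (C e = Fin.castSucc c₂ ∧ (D e).1 = v)).card := by rw [h3]
              _ = (Finset.univ.filter fun e₂ : {e : E // ¬ sel e} =>
                    C e₂.val = Fin.castSucc c₂ ∧ (D e₂.val).1 = v).card := h1.symm
              _ = (Finset.univ.filter fun e₂ : {e : E // ¬ sel e} =>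
                    C₂ e₂ = c₂ ∧ (D e₂.val).1 = v).card := by rw [h2]
          constructor
          · exact le_of_eq_of_le hfeA ((hC₂ c₂ v).1)
          · exact le_of_eq_of_le hfeB ((hC₂ c₂ v).2)

end Split

section MainAux
variable {V : Type} {E : Type} [Fintype V] [Fintype E] [DecidableEq V]

lemma le_untop'_of {x d : ℕ} {m : ℕ∞} (h1 : (x : ℕ∞) ≤ m) (h2 : x ≤ d) :
    x ≤ WithTop.untopD d m := by
  induction m using WithTop.recTopCoe with
  | top => simpa using h2
  | coe n => change x ≤ n; exact WithTop.coe_le_coe.1 h1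

lemma coe_le_of_le_untop' {x d : ℕ} {m : ℕ∞} (h : x ≤ WithTop.untopD d m) : (x : ℕ∞) ≤ m := by
  induction m using WithTop.recTopCoe with
  | top => exact le_top
  | coe n => change x ≤ n at h; exact WithTop.coe_le_coe.2 h

lemma sym2_cases (s : Sym2 V) : ∃ a b, s = s(a, b) :=
  ⟨(Quot.out s).1, (Quot.out s).2, (Quot.out_eq s).symm⟩

lemma degree_pos_of_edge {ends : E → Sym2 V} {e : E} {x y : V} (hxy : ends e = s(x, y)) :
    1 ≤ degree ends x := by
  unfold degree
  have h1 : 1 ≤ mult x (ends e) := by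
    rw [hxy, mult_mk]
    simp
  exact le_trans h1 (Finset.single_le_sum (f := fun e' => mult x (ends e'))
    (fun _ _ => Nat.zero_le _) (Finset.mem_univ e))

lemma degree_le_maxDegree (ends : E → Sym2 V) (v : V) : degree ends v ≤ maxDegree ends :=
  Finset.le_sup (Finset.mem_univ v)

lemma degree_sub_le (ends : E → Sym2 V) (P : E → Prop) [Fintype {x // P x}] (v : V) :
    degree (subEnds ends P) v ≤ degree ends v := by
  unfold degree subEnds
  rw [sum_subtype_univ' P (fun e => mult v (ends e))]
  exact Finset.sum_le_sum_of_subset (Finset.filter_subset _ _)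

lemma degree_fiber {k : ℕ} (ends : E → Sym2 V) (C : E → Fin k) (v : V) :
    degree ends v = ∑ c : Fin k, degree (subEnds ends fun e => C e = c) v := by
  unfold degree subEnds
  rw [← sum_fiber C (fun e => mult v (ends e))]
  refine Finset.sum_congr rfl fun c _ => ?_
  rw [sum_subtype_univ' (fun e => C e = c) (fun e => mult v (ends e))]

lemma edgesWithin_fiber {k : ℕ} (ends : E → Sym2 V) (C : E → Fin k) (S : Finset V) :
    edgesWithin ends S = ∑ c : Fin k, edgesWithin (subEnds ends fun e => C e = c) S := by
  unfold edgesWithin subEnds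
  rw [← card_fiber C (fun e => ∀ v ∈ ends e, v ∈ S)]
  refine Finset.sum_congr rfl fun c _ => ?_
  exact (card_filter_subtype (fun e => C e = c) (fun e => ∀ v ∈ ends e, v ∈ S)).symm

/-- In a `(g,h)`-orientation of a subgraph, the indegree of each vertex is at most
the truncated `g` and the outdegree at most the truncated `h`. -/
lemma sub_inDeg_le {ends : E → Sym2 V} {g h : V → ℕ∞} {P : E → Prop} [Fintype {x // P x}]
    {D : {e // P e} → V × V} (hD : IsOrientation (subEnds ends P) D)
    (hin : ∀ v, (inDeg D v : ℕ∞) ≤ g v) (hout : ∀ v, (outDeg D v : ℕ∞) ≤ h v) (v : V) :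
    inDeg D v ≤ trunc ends g v ∧ outDeg D v ≤ trunc ends h v := by
  have hdeg : degree (subEnds ends P) v = outDeg D v + inDeg D v :=
    degree_eq_out_add_in hD v
  have hle : degree (subEnds ends P) v ≤ maxDegree ends :=
    le_trans (degree_sub_le ends P v) (degree_le_maxDegree ends v)
  constructor
  · exact le_untop'_of (hin v) (by omega)
  · exact le_untop'_of (hout v) (by omega)

/-- Edges of a subgraph within `S`, bounded by the sum of indegrees over `S`. -/
lemma edgesWithin_le_sum_inDeg {W : Type} [Fintype W] [DecidableEq W]
    {F : Type} [Fintype F] {ends : F → Sym2 W} {D : F → W × W}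
    (hD : IsOrientation ends D) (S : Finset W) :
    edgesWithin ends S ≤ ∑ v ∈ S, inDeg D v := by
  unfold edgesWithin
  have hsub : (Finset.univ.filter fun e => ∀ w ∈ ends e, w ∈ S)
      ⊆ Finset.univ.filter fun e => (D e).2 ∈ S := by
    intro e he
    simp only [Finset.mem_filter, Finset.mem_univ, true_and] at he ⊢
    exact he _ ((mem_ends_iff hD e _).2 (Or.inr rfl))
  refine le_trans (Finset.card_le_card hsub) ?_
  rw [Finset.card_eq_sum_card_fiberwise (f := fun e => (D e).2) (s := Finset.univ.filter fun e => (D e).2 ∈ S) (t := S)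
    (fun e he => (Finset.mem_filter.1 he).2)]
  refine Finset.sum_le_sum fun v _ => ?_
  unfold inDeg
  exact Finset.card_le_card (Finset.filter_subset_filter _ (Finset.filter_subset _ _))

lemma edgesWithin_le_sum_outDeg {W : Type} [Fintype W] [DecidableEq W]
    {F : Type} [Fintype F] {ends : F → Sym2 W} {D : F → W × W}
    (hD : IsOrientation ends D) (S : Finset W) :
    edgesWithin ends S ≤ ∑ v ∈ S, outDeg D v := by
  unfold edgesWithin
  have hsub : (Finset.univ.filter fun e => ∀ w ∈ ends e, w ∈ S)
      ⊆ Finset.univ.filter fun e => (D e).1 ∈ S := by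
    intro e he
    simp only [Finset.mem_filter, Finset.mem_univ, true_and] at he ⊢
    exact he _ ((mem_ends_iff hD e _).2 (Or.inl rfl))
  refine le_trans (Finset.card_le_card hsub) ?_
  rw [Finset.card_eq_sum_card_fiberwise (f := fun e => (D e).1) (s := Finset.univ.filter fun e => (D e).1 ∈ S) (t := S)
    (fun e he => (Finset.mem_filter.1 he).2)]
  refine Finset.sum_le_sum fun v _ => ?_
  unfold outDeg
  exact Finset.card_le_card (Finset.filter_subset_filter _ (Finset.filter_subset _ _))

lemma lower_bound {ends : E → Sym2 V} {g h : V → ℕ∞} {j : ℕ}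
    {C : E → Fin j} (hC : GHColoring ends g h C) :
    max (ghMaxDegree ends g h) (ghMaxDensity ends g h) ≤ j := by
  classical
  rw [max_le_iff]
  constructor
  · -- degree bound
    refine Finset.sup_le fun v _ => ?_
    rcases Nat.eq_zero_or_pos (trunc ends g v + trunc ends h v) with h0 | hpos
    · rw [h0, cdiv_zero']
      exact Nat.zero_le j
    · rw [cdiv_le_iff hpos]
      rw [degree_fiber ends C v]
      have hper : ∀ c : Fin j, degree (subEnds ends fun e => C e = c) v
          ≤ trunc ends g v + trunc ends h v := by
        intro c
        obtain ⟨D, hD, hin, hout⟩ := hC c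
        have hb := sub_inDeg_le hD hin hout v
        have hdeg : degree (subEnds ends fun e => C e = c) v = outDeg D v + inDeg D v :=
          degree_eq_out_add_in hD v
        omega
      calc ∑ c : Fin j, degree (subEnds ends fun e => C e = c) v
          ≤ ∑ _c : Fin j, (trunc ends g v + trunc ends h v) :=
            Finset.sum_le_sum fun c _ => hper c
        _ = j * (trunc ends g v + trunc ends h v) := by
            rw [Finset.sum_const, Finset.card_univ, Fintype.card_fin, smul_eq_mul]
  · -- density bound
    refine Finset.sup_le fun S _ => ?_
    rcases Nat.eq_zero_or_pos
      (min (∑ v ∈ S, trunc ends g v) (∑ v ∈ S, trunc ends h v)) with h0 | hpos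
    · rw [h0, cdiv_zero']
      exact Nat.zero_le j
    · rw [cdiv_le_iff hpos]
      have hg : edgesWithin ends S ≤ j * ∑ v ∈ S, trunc ends g v := by
        rw [edgesWithin_fiber ends C S]
        have hper : ∀ c : Fin j, edgesWithin (subEnds ends fun e => C e = c) S
            ≤ ∑ v ∈ S, trunc ends g v := by
          intro c
          obtain ⟨D, hD, hin, hout⟩ := hC c
          refine le_trans (edgesWithin_le_sum_inDeg hD S) ?_
          exact Finset.sum_le_sum fun v _ => (sub_inDeg_le hD hin hout v).1
        calc ∑ c : Fin j, edgesWithin (subEnds ends fun e => C e = c) S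
            ≤ ∑ _c : Fin j, ∑ v ∈ S, trunc ends g v :=
              Finset.sum_le_sum fun c _ => hper c
          _ = j * ∑ v ∈ S, trunc ends g v := by
              rw [Finset.sum_const, Finset.card_univ, Fintype.card_fin, smul_eq_mul]
      have hh : edgesWithin ends S ≤ j * ∑ v ∈ S, trunc ends h v := by
        rw [edgesWithin_fiber ends C S]
        have hper : ∀ c : Fin j, edgesWithin (subEnds ends fun e => C e = c) S
            ≤ ∑ v ∈ S, trunc ends h v := by
          intro c
          obtain ⟨D, hD, hin, hout⟩ := hC c
          refine le_trans (edgesWithin_le_sum_outDeg hD S) ?_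
          exact Finset.sum_le_sum fun v _ => (sub_inDeg_le hD hin hout v).2
        calc ∑ c : Fin j, edgesWithin (subEnds ends fun e => C e = c) S
            ≤ ∑ _c : Fin j, ∑ v ∈ S, trunc ends h v :=
              Finset.sum_le_sum fun c _ => hper c
          _ = j * ∑ v ∈ S, trunc ends h v := by
              rw [Finset.sum_const, Finset.card_univ, Fintype.card_fin, smul_eq_mul]
      rcases min_cases (∑ v ∈ S, trunc ends g v) (∑ v ∈ S, trunc ends h v) with
        ⟨hm, _⟩ | ⟨hm, _⟩
      · rw [hm]; exact hg
      · rw [hm]; exact hh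

end MainAux

section Final
variable {V : Type} {E : Type} [Fintype V] [Fintype E] [DecidableEq V]

lemma maxDegree_zero_edges (ends : E → Sym2 V) (h0 : maxDegree ends = 0) (S : Finset V) :
    edgesWithin ends S = 0 := by
  have hE : ∀ e : E, False := fun e => by
    obtain ⟨x, y, hxy⟩ := sym2_cases (ends e)
    have h1 := degree_pos_of_edge hxy
    have h2 := degree_le_maxDegree ends x
    omega
  unfold edgesWithin
  rw [Finset.card_eq_zero, Finset.filter_eq_empty_iff]
  intro e _
  exact (hE e).elim

lemma edgesWithin_zero_of_val {ends : E → Sym2 V} {f : V → ℕ∞}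
    (hadj : ∀ u v, Adj ends u v → 1 ≤ f u + f v) {S : Finset V}
    (h0 : ∀ v ∈ S, f v = 0) : edgesWithin ends S = 0 := by
  unfold edgesWithin
  rw [Finset.card_eq_zero, Finset.filter_eq_empty_iff]
  intro e _ hP
  obtain ⟨x, y, hxy⟩ := sym2_cases (ends e)
  have hx : x ∈ S := hP x (by rw [hxy]; exact Sym2.mem_mk_left x y)
  have hy : y ∈ S := hP y (by rw [hxy]; exact Sym2.mem_mk_right x y)
  have hv := hadj x y ⟨e, hxy⟩
  rw [h0 x hx, h0 y hy] at hv
  simp at hv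

lemma trunc_zero_cases {ends : E → Sym2 V} {g : V → ℕ∞} {v : V}
    (h : trunc ends g v = 0) : g v = 0 ∨ maxDegree ends = 0 := by
  unfold trunc at h
  rcases eq_or_ne (g v) ⊤ with htop | hne
  · right
    rw [htop] at h
    exact h
  · left
    obtain ⟨n, hn⟩ := WithTop.ne_top_iff_exists.1 hne
    rw [← hn] at h ⊢
    simp only [WithTop.untopD_coe] at h
    subst h
    rfl

end Final

/-- Theorem 1.2, oriented Goldberg–Seymour: for every multigraph `G`
and valid pair of functions `(g,h)`,
`χ'_{(g,h)}(G) = max {Δ_{(g,h)}(G), W_{(g,h)}(G)}`. -/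
theorem oriented_goldberg_seymour {V E : Type} [Fintype V] [Fintype E] [DecidableEq V]
    (ends : E → Sym2 V) (g h : V → ℕ∞) (hgh : ValidPair ends g h) :
    ghChromaticIndex ends g h = max (ghMaxDegree ends g h) (ghMaxDensity ends g h) := by
  classical
  set K := max (ghMaxDegree ends g h) (ghMaxDensity ends g h) with hK
  have hDK : ghMaxDegree ends g h ≤ K := le_max_left _ _
  have hWK : ghMaxDensity ends g h ≤ K := le_max_right _ _
  have hmem : ∃ C : E → Fin K, GHColoring ends g h C := by
    rcases Nat.eq_zero_or_pos K with hK0 | hKpos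
    · have hEempty : ∀ e : E, False := by
        intro e
        obtain ⟨x, y, hxy⟩ := sym2_cases (ends e)
        have hdx : 1 ≤ degree ends x := degree_pos_of_edge hxy
        have hsup : cdiv (degree ends x) (trunc ends g x + trunc ends h x)
            ≤ ghMaxDegree ends g h :=
          Finset.le_sup (f := fun v => cdiv (degree ends v)
            (trunc ends g v + trunc ends h v)) (Finset.mem_univ x)
        rcases Nat.eq_zero_or_pos (trunc ends g x + trunc ends h x) with ht0 | htpos
        · have hΔ : 1 ≤ maxDegree ends := le_trans hdx (degree_le_maxDegree ends x)
          have hgx := trunc_zero_cases (ends := ends) (g := g) (v := x) (by omega)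
          have hhx := trunc_zero_cases (ends := ends) (g := h) (v := x) (by omega)
          have hv := hgh.1 x
          rcases hgx with hg0 | hΔ0
          · rcases hhx with hh0 | hΔ0
            · rw [hg0, hh0] at hv; simp at hv
            · omega
          · omega
        · have := (cdiv_le_iff htpos (degree ends x) 0).1 (by omega)
          omega
      refine ⟨fun e => (hEempty e).elim, fun c => ?_⟩
      exact absurd c.isLt (by omega)
    · have hd : ∀ v, degree ends v
          ≤ (fun v => K * trunc ends g v) v + (fun v => K * trunc ends h v) v := by
        intro v
        simp only
        have hsup : cdiv (degree ends v) (trunc ends g v + trunc ends h v)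
            ≤ ghMaxDegree ends g h :=
          Finset.le_sup (f := fun v => cdiv (degree ends v)
            (trunc ends g v + trunc ends h v)) (Finset.mem_univ v)
        rcases Nat.eq_zero_or_pos (trunc ends g v + trunc ends h v) with ht0 | htpos
        · have hgx := trunc_zero_cases (ends := ends) (g := g) (v := v) (by omega)
          have hhx := trunc_zero_cases (ends := ends) (g := h) (v := v) (by omega)
          have hv := hgh.1 v
          rcases hgx with hg0 | hΔ0
          · rcases hhx with hh0 | hΔ0
            · rw [hg0, hh0] at hv; simp at hv
            · have := degree_le_maxDegree ends v; omega
          · have := degree_le_maxDegree ends v; omega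
        · have hdeg : degree ends v ≤ K * (trunc ends g v + trunc ends h v) :=
            (cdiv_le_iff htpos _ _).1 (by omega)
          have hsplit : K * (trunc ends g v + trunc ends h v)
              = K * trunc ends g v + K * trunc ends h v := by ring
          omega
      have hedge : ∀ (S : Finset V),
          edgesWithin ends S ≤ K * ∑ v ∈ S, trunc ends g v ∧
          edgesWithin ends S ≤ K * ∑ v ∈ S, trunc ends h v := by
        intro S
        by_cases hgeS : (1 : ℕ∞) ≤ ∑ v ∈ S, g v
        · by_cases hheS : (1 : ℕ∞) ≤ ∑ v ∈ S, h v
          · have hmemS : S ∈ Finset.univ.filter fun S : Finset V =>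
                (1 ≤ ∑ v ∈ S, g v) ∧ (1 ≤ ∑ v ∈ S, h v) := by
              simp only [Finset.mem_filter, Finset.mem_univ, true_and]
              exact ⟨hgeS, hheS⟩
            have hsup : cdiv (edgesWithin ends S)
                (min (∑ v ∈ S, trunc ends g v) (∑ v ∈ S, trunc ends h v))
                ≤ ghMaxDensity ends g h :=
              Finset.le_sup (f := fun S => cdiv (edgesWithin ends S)
                (min (∑ v ∈ S, trunc ends g v) (∑ v ∈ S, trunc ends h v))) hmemS
            rcases Nat.eq_zero_or_pos
              (min (∑ v ∈ S, trunc ends g v) (∑ v ∈ S, trunc ends h v)) with hm0 | hmpos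
            · have hΔ0 : maxDegree ends = 0 := by
                have hz' : (∑ v ∈ S, trunc ends g v) = 0
                    ∨ (∑ v ∈ S, trunc ends h v) = 0 := by omega
                rcases hz' with hz | hz
                · have hex : ∃ v ∈ S, g v ≠ 0 := by
                    by_contra hall
                    push_neg at hall
                    rw [Finset.sum_eq_zero fun v hv => hall v hv] at hgeS
                    simp at hgeS
                  obtain ⟨v, hvS, hv0⟩ := hex
                  have htz : trunc ends g v = 0 := (Finset.sum_eq_zero_iff.1 hz) v hvS
                  rcases trunc_zero_cases htz with hc | hc
                  · exact absurd hc hv0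
                  · exact hc
                · have hex : ∃ v ∈ S, h v ≠ 0 := by
                    by_contra hall
                    push_neg at hall
                    rw [Finset.sum_eq_zero fun v hv => hall v hv] at hheS
                    simp at hheS
                  obtain ⟨v, hvS, hv0⟩ := hex
                  have htz : trunc ends h v = 0 := (Finset.sum_eq_zero_iff.1 hz) v hvS
                  rcases trunc_zero_cases htz with hc | hc
                  · exact absurd hc hv0
                  · exact hc
              rw [maxDegree_zero_edges ends hΔ0 S]
              exact ⟨Nat.zero_le _, Nat.zero_le _⟩
            · have hle : edgesWithin ends S
                  ≤ K * min (∑ v ∈ S, trunc ends g v) (∑ v ∈ S, trunc ends h v) :=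
                (cdiv_le_iff hmpos _ _).1 (by omega)
              constructor
              · exact le_trans hle (Nat.mul_le_mul_left K (min_le_left _ _))
              · exact le_trans hle (Nat.mul_le_mul_left K (min_le_right _ _))
          · have hz : ∀ v ∈ S, h v = 0 := by
              have hs0 : ∑ v ∈ S, h v = 0 := by
                by_contra hne
                exact hheS (ENat.one_le_iff_ne_zero.2 hne)
              exact fun v hv => (Finset.sum_eq_zero_iff.1 hs0) v hv
            rw [edgesWithin_zero_of_val hgh.2.2 hz]
            exact ⟨Nat.zero_le _, Nat.zero_le _⟩
        · have hz : ∀ v ∈ S, g v = 0 := by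
            have hs0 : ∑ v ∈ S, g v = 0 := by
              by_contra hne
              exact hgeS (ENat.one_le_iff_ne_zero.2 hne)
            exact fun v hv => (Finset.sum_eq_zero_iff.1 hs0) v hv
          rw [edgesWithin_zero_of_val hgh.2.1 hz]
          exact ⟨Nat.zero_le _, Nat.zero_le _⟩
      obtain ⟨D, hD, hin, hout⟩ := orientation_exists ends
        (fun v => K * trunc ends g v) (fun v => K * trunc ends h v) hd
        (fun S => by rw [← Finset.mul_sum]; exact (hedge S).1)
        (fun S => by rw [← Finset.mul_sum]; exact (hedge S).2)
      obtain ⟨C, hC⟩ := split_orientation K E D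
        (fun v => trunc ends g v) (fun v => trunc ends h v) hKpos
        (fun v => hin v) (fun v => hout v)
      refine ⟨C, fun c => ?_⟩
      refine ⟨fun e₂ => D e₂.val, fun e₂ => hD e₂.val, fun v => ?_, fun v => ?_⟩
      · have h1 : inDeg (fun e₂ : {e // C e = c} => D e₂.val) v
            = (Finset.univ.filter fun e => C e = c ∧ (D e).2 = v).card :=
          card_filter_subtype (fun e => C e = c) (fun e => (D e).2 = v)
        have h2 := (hC c v).1
        exact coe_le_of_le_untop' (d := maxDegree ends) (h1.trans_le h2)
      · have h1 : outDeg (fun e₂ : {e // C e = c} => D e₂.val) v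
            = (Finset.univ.filter fun e => C e = c ∧ (D e).1 = v).card :=
          card_filter_subtype (fun e => C e = c) (fun e => (D e).1 = v)
        have h2 := (hC c v).2
        exact coe_le_of_le_untop' (d := maxDegree ends) (h1.trans_le h2)
  have hmax : ∀ j ∈ {k | ∃ C : E → Fin k, GHColoring ends g h C}, K ≤ j := by
    rintro j ⟨Cj, hCj⟩
    rw [hK]
    exact lower_bound hCj
  unfold ghChromaticIndex
  exact le_antisymm (Nat.sInf_le hmem) (le_csInf ⟨K, hmem⟩ hmax)


end MG
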